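/- Let q be a prime power and let t, m be positive integers with t dividing m and t < m. Let b ∈ E satisfy b^{q^t} ≠ b (i.e., b does not lie in the subfield of E with q^t elements), and set λ = (b − b^{q^t})/(b^{q^t} − b^{q^{2t}}) ∈ E. Define F(X) = X^{q^t + 1} + (1 + λ)·X^{q^t} + λ ∈ E[X]. Then F has exactly q^t + 1 distinct roots in E, and all of these roots are nonzero. -/

import Mathlib

open Polynomial

lemma card_fixed_aux (E : Type) [Field E] [Fintype E] (p a k : ℕ) (hp : Fact p.Prime) [CharP E p]
    (ha : p ∣ a) (ha1 : 1 < a) (hk : 0 < k)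
    (hE : Fintype.card E = a ^ k) :
    {μ : E | μ ^ a = μ}.ncard = a := by
  classical
  have hg0 : (X ^ a - X : E[X]) ≠ 0 := FiniteField.X_pow_card_sub_X_ne_zero E ha1
  have hgsep : (X ^ a - X : E[X]).Separable := galois_poly_separable p a ha
  have hbigne : (X ^ Fintype.card E - X : E[X]) ≠ 0 :=
    FiniteField.X_pow_card_sub_X_ne_zero E Fintype.one_lt_card
  have hbigsplit : Splits (X ^ Fintype.card E - X : E[X]) := by
    rw [splits_iff_card_roots, FiniteField.roots_X_pow_card_sub_X,
      FiniteField.X_pow_card_sub_X_natDegree_eq E Fintype.one_lt_card]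
    simp
  have hdvd : (X ^ a - X : E[X]) ∣ (X ^ Fintype.card E - X) := by
    have h1 : (X ^ a - X : E[X]) = X * (X ^ (a - 1) - 1) := by
      rw [mul_sub, mul_one, ← pow_succ']
      congr 2
      omega
    have h2 : (X ^ Fintype.card E - X : E[X]) = X * (X ^ (a ^ k - 1) - 1) := by
      rw [mul_sub, mul_one, ← pow_succ', hE]
      congr 2
      have := Nat.one_le_pow k a (by omega)
      omega
    rw [h1, h2]
    apply mul_dvd_mul_left
    obtain ⟨r, hr⟩ : (a - 1) ∣ (a ^ k - 1) := by
      simpa using Nat.sub_dvd_pow_sub_pow a 1 k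
    have := sub_dvd_pow_sub_pow (X ^ (a - 1) : E[X]) 1 r
    rw [one_pow, ← pow_mul, ← hr] at this
    exact this
  have hsplit : Splits (X ^ a - X : E[X]) :=
    hbigsplit.of_dvd hbigne hdvd
  have hset : {μ : E | μ ^ a = μ} = (X ^ a - X : E[X]).rootSet E := by
    ext z
    simp [mem_rootSet', hg0, sub_eq_zero]
  rw [hset, ← Nat.card_coe_set_eq, Nat.card_eq_fintype_card,
    card_rootSet_eq_natDegree hgsep
      (by rw [Algebra.algebraMap_self, Polynomial.map_id]; exact hsplit),
    FiniteField.X_pow_card_sub_X_natDegree_eq E ha1]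

/-- Lemma: roots of `F(X) = X^{q^t+1} + (1+λ)X^{q^t} + λ`.
Let `t ∣ m`, `t < m`, let `b ∈ E` with `b^{q^t} ≠ b`, and set
`λ = (b - b^{q^t})/(b^{q^t} - b^{q^{2t}})`. Then
`F(X) = X^{q^t+1} + (1+λ)X^{q^t} + λ` has exactly `q^t + 1` distinct roots in `E`,
all of which are nonzero. -/
theorem aux_polynomial_qt_plus_one_roots
    (q t m : ℕ) (hq : IsPrimePow q) (ht : 0 < t) (htm : t ∣ m) (htm' : t < m)
    (F E : Type) [Field F] [Fintype F] [Field E] [Fintype E] [Algebra F E]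
    (hF : Fintype.card F = q) (hE : Fintype.card E = q ^ m)
    (b : E) (hb : b ^ q ^ t ≠ b)
    (lam : E) (hlam : lam = (b - b ^ q ^ t) / (b ^ q ^ t - b ^ q ^ (2 * t))) :
    {x : E | (X ^ (q ^ t + 1) + C (1 + lam) * X ^ q ^ t + C lam : Polynomial E).eval x
        = 0}.ncard = q ^ t + 1 ∧
    ∀ x : E,
      (X ^ (q ^ t + 1) + C (1 + lam) * X ^ q ^ t + C lam : Polynomial E).eval x = 0 →
      x ≠ 0 := by
  classical
  obtain ⟨p, e, hpp, he, hpe⟩ := hq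
  have hp : p.Prime := hpp.nat_prime
  haveI : Fact p.Prime := ⟨hp⟩
  subst hpe
  -- characteristic of E is p
  haveI hcharE : CharP E p := by
    obtain ⟨r, hr⟩ := CharP.exists E
    haveI := hr
    have hrp : r.Prime := CharP.char_is_prime E r
    haveI : Fact r.Prime := ⟨hrp⟩
    obtain ⟨n, hn⟩ := FiniteField.card E r
    have heq : (r : ℕ) ^ (n : ℕ) = p ^ (e * m) := by rw [← hn.2, hE, ← pow_mul]
    have : r = p := by
      have hdvd : r ∣ p ^ (e * m) := heq ▸ dvd_pow_self r n.pos.ne'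
      exact (Nat.prime_dvd_prime_iff_eq hrp hp).mp (hrp.dvd_of_dvd_pow hdvd)
    subst this
    exact hr
  set s := (p ^ e) ^ t with hsdef
  have hsp : s = p ^ (e * t) := by rw [hsdef, pow_mul]
  have hs1 : 1 < s := by
    rw [hsp]
    exact Nat.one_lt_pow (by positivity) hp.one_lt
  have hs0 : s ≠ 0 := by omega
  -- Frobenius facts
  have hadd : ∀ x y : E, (x + y) ^ s = x ^ s + y ^ s := by
    intro x y; rw [hsp]; exact add_pow_char_pow x y p (e * t)
  have hsub : ∀ x y : E, (x - y) ^ s = x ^ s - y ^ s := by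
    intro x y; rw [hsp]; exact sub_pow_char_pow x y (e * t)
  have hneg : ∀ x : E, (-x) ^ s = -(x ^ s) := by
    intro x
    have := hsub 0 x
    simpa [zero_pow hs0] using this
  -- basic quantities
  have hexp : (p ^ e) ^ (2 * t) = s * s := by
    rw [hsp, ← pow_add, ← pow_mul]
    congr 1
    ring
  have hb2 : b ^ (p ^ e) ^ (2 * t) = (b ^ s) ^ s := by rw [hexp, pow_mul]
  set d := b - b ^ s with hddef
  have hd : d ≠ 0 := sub_ne_zero.mpr (Ne.symm hb)
  have hds : d ^ s = b ^ s - (b ^ s) ^ s := hsub b (b ^ s)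
  have hd's : d ^ s ≠ 0 := pow_ne_zero _ hd
  have hlam2 : lam = d / d ^ s := by rw [hlam, hb2, ← hds, hddef]
  have hlam0 : lam ≠ 0 := by rw [hlam2]; exact div_ne_zero hd hd's
  have hlamd : lam * d ^ s = d := by rw [hlam2]; field_simp
  have hbs : (b ^ s) ^ s ≠ b ^ s := by
    intro h
    exact hd's (by rw [hds, h, sub_self])
  have hbs2 : ((b ^ s) ^ s) ^ s ≠ (b ^ s) ^ s := by
    intro h
    have : (d ^ s) ^ s = 0 := by rw [hds, hsub, h, sub_self]
    exact pow_ne_zero _ hd's this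
  set K : Set E := {μ | μ ^ s = μ} with hKdef
  set f : E → E := fun μ => -(μ + b) / (μ + b ^ s) with hfdef
  have hden1 : ∀ μ ∈ K, μ + b ^ s ≠ 0 := by
    intro μ hμ h
    have hμ' : μ ^ s = μ := hμ
    have hμe : μ = -(b ^ s) := eq_neg_of_add_eq_zero_left h
    rw [hμe, hneg] at hμ'
    exact hbs (neg_injective hμ')
  have hden2 : ∀ μ ∈ K, μ + (b ^ s) ^ s ≠ 0 := by
    intro μ hμ h
    have hμ' : μ ^ s = μ := hμ
    have hμe : μ = -((b ^ s) ^ s) := eq_neg_of_add_eq_zero_left h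
    rw [hμe, hneg] at hμ'
    exact hbs2 (neg_injective hμ')
  have himg : ∀ μ ∈ K, f μ ^ s = -(μ + b ^ s) / (μ + (b ^ s) ^ s) := by
    intro μ hμ
    have hμ' : μ ^ s = μ := hμ
    rw [hfdef]
    simp only
    rw [div_pow, hneg, hadd, hadd, hμ']
  -- the root set
  have hset : {x : E | (X ^ (s + 1) + C (1 + lam) * X ^ s + C lam : Polynomial E).eval x = 0}
      = insert (-1 : E) (f '' K) := by
    ext x
    simp only [Set.mem_setOf_eq, eval_add, eval_mul, eval_pow, eval_X, eval_C,
      Set.mem_insert_iff, Set.mem_image]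
    constructor
    · intro hx
      by_cases hx1 : x = -1
      · left; exact hx1
      right
      have h1 : x + 1 ≠ 0 := fun h => hx1 (eq_neg_of_add_eq_zero_left h)
      set u := x / (x + 1) with hudef
      have hxp : (x + 1) ^ s = x ^ s + 1 := by rw [hadd, one_pow]
      have hkey : x ^ s * (x + 1) + lam * (x ^ s + 1) = 0 := by
        have : x ^ s * (x + 1) + lam * (x ^ s + 1)
            = x ^ (s + 1) + (1 + lam) * x ^ s + lam := by rw [pow_succ]; ring
        rw [this, hx]
      have hu : u ^ s = -lam / (x + 1) := by
        have h2 : (x + 1) ^ s ≠ 0 := pow_ne_zero _ h1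
        rw [hudef, div_pow, hxp]
        rw [div_eq_div_iff (by rwa [← hxp]) h1]
        linear_combination hkey
      refine ⟨d * u - b, ?_, ?_⟩
      · show (d * u - b) ^ s = d * u - b
        rw [hsub, mul_pow, hu]
        rw [hudef]
        field_simp
        linear_combination -hlamd - (x + 1) * hddef
      · show f (d * u - b) = x
        rw [hfdef]
        simp only
        have e1 : d * u - b + b = d * u := by ring
        have e2 : d * u - b + b ^ s = d * (u - 1) := by rw [hddef]; ring
        rw [e1, e2]
        have hu1 : u - 1 = -1 / (x + 1) := by rw [hudef]; field_simp; ring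
        rw [hudef, hu1]
        field_simp
    · intro hx
      rcases hx with rfl | ⟨μ, hμ, rfl⟩
      · have hneg1 : (-1 : E) ^ s = -1 := by simpa using hneg 1
        rw [pow_succ, hneg1]
        ring
      · have h1 := hden1 μ hμ
        have h2 := hden2 μ hμ
        have hx := himg μ hμ
        rw [pow_succ, hx, hfdef]
        simp only
        have hlamd' : lam * (b ^ s - (b ^ s) ^ s) = b - b ^ s := by
          rw [← hds, ← hddef]; exact hlamd
        have key : -(μ + b ^ s) / (μ + (b ^ s) ^ s) * (-(μ + b) / (μ + b ^ s))
            + (1 + lam) * (-(μ + b ^ s) / (μ + (b ^ s) ^ s)) + lam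
            = ((μ + b) - (1 + lam) * (μ + b ^ s) + lam * (μ + (b ^ s) ^ s))
              / (μ + (b ^ s) ^ s) := by
          field_simp
          ring
        rw [key]
        have hnum : (μ + b) - (1 + lam) * (μ + b ^ s) + lam * (μ + (b ^ s) ^ s) = 0 := by
          linear_combination -hlamd'
        rw [hnum, zero_div]
  -- injectivity
  have hinj : Set.InjOn f K := by
    intro μ hμ ν hν h
    have d1 := hden1 μ hμ
    have d2 := hden1 ν hν
    rw [hfdef] at h
    simp only at h
    rw [div_eq_div_iff d1 d2] at h
    have : (μ - ν) * (b ^ s - b) = 0 := by linear_combination -h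
    rcases mul_eq_zero.mp this with h' | h'
    · exact sub_eq_zero.mp h'
    · exact absurd (sub_eq_zero.mp h') hb
  have hnotmem : (-1 : E) ∉ f '' K := by
    rintro ⟨μ, hμ, hfμ⟩
    have d1 := hden1 μ hμ
    rw [hfdef] at hfμ
    simp only at hfμ
    rw [div_eq_iff d1] at hfμ
    have : b ^ s = b := by linear_combination hfμ
    exact hb this
  have hKcard : K.ncard = s := by
    obtain ⟨k, hk⟩ := htm
    have hk0 : 0 < k := by
      rcases Nat.eq_zero_or_pos k with h | h
      · subst h; simp at hk; omega
      · exact h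
    refine card_fixed_aux E p s k ⟨hp⟩ ?_ hs1 hk0 ?_
    · rw [hsp]; exact dvd_pow_self p (by positivity)
    · rw [hE, hk, pow_mul]
  constructor
  · rw [hset, Set.ncard_insert_of_notMem hnotmem (Set.toFinite _),
      Set.ncard_image_of_injOn hinj, hKcard]
  · intro x hx hx0
    subst hx0
    simp only [eval_add, eval_mul, eval_pow, eval_X, eval_C, zero_pow hs0,
      zero_pow (Nat.succ_ne_zero s), mul_zero, add_zero, zero_add] at hx
    exact hlam0 hx
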